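/- For a square tiled matrix of size p × p with p > 1, the critical path length of the TS-FT algorithm (FlatTree with TS kernels) equals 30p − 34. -/

import Mathlib

namespace TiledQR

/-- An elimination `elim(i, piv, k)`: tile `(i, k)` is zeroed out by an orthogonal
transformation combining row `i` with pivot row `piv`. -/
structure Elim where
  i : ℕ
  piv : ℕ
  k : ℕ
deriving DecidableEq

/-- `Before L e f` : the elimination `e` occurs strictly before `f` in the list `L`. -/
def Before (L : List Elim) (e f : Elim) : Prop :=
  ∃ a b : Fin L.length, (a : ℕ) < b ∧ L.get a = e ∧ L.get b = f

/-- `L` is a valid elimination list for a `p × q` tiled matrix: it contains exactly one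
elimination for every sub-diagonal tile `(i, k)` (`1 ≤ k ≤ min p q`, `k < i ≤ p`);
every elimination `elim(i, piv, k)` comes after all eliminations `elim(i, *, k')` and
`elim(piv, *, k')` with `k' < k`, and before the elimination `elim(piv, *, k)` of its
pivot row. -/
def ValidElimList (p q : ℕ) (L : List Elim) : Prop :=
  L.Nodup ∧
  (∀ e ∈ L, 1 ≤ e.k ∧ e.k ≤ min p q ∧ e.k < e.i ∧ e.i ≤ p ∧
      1 ≤ e.piv ∧ e.piv ≤ p ∧ e.piv ≠ e.i) ∧
  (∀ i k, 1 ≤ k → k ≤ min p q → k < i → i ≤ p → ∃! piv, Elim.mk i piv k ∈ L) ∧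
  (∀ a b : Fin L.length, (L.get b).k < (L.get a).k →
      ((L.get b).i = (L.get a).i ∨ (L.get b).i = (L.get a).piv) → (b : ℕ) < a) ∧
  (∀ a b : Fin L.length, (L.get b).k = (L.get a).k →
      (L.get b).i = (L.get a).piv → (a : ℕ) < b)

/-- The tasks of the tiled QR factorization with TT (triangle-on-top-of-triangle)
kernels. -/
inductive Task where
  | GEQRT (r k : ℕ)
  | UNMQR (r k j : ℕ)
  | TTQRT (i piv k : ℕ)
  | TTMQR (i piv k j : ℕ)
deriving DecidableEq

/-- Weights of the TT kernels, the unit being `n_b ^ 3 / 3` flops. -/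
def weight : Task → ℕ
  | .GEQRT _ _ => 4
  | .UNMQR _ _ _ => 6
  | .TTQRT _ _ _ => 2
  | .TTMQR _ _ _ _ => 6

/-- The tasks associated with a `p × q` tiled matrix and an elimination list `L`:
a factorization `GEQRT(r, k)` and updates `UNMQR(r, k, j)` (`k < j ≤ q`) for every tile
`(r, k)` with `k ≤ r ≤ p`, and, for every elimination `elim(i, piv, k)` of `L`, a task
`TTQRT(i, piv, k)` and updates `TTMQR(i, piv, k, j)` for `k < j ≤ q`. -/
def InTasks (p q : ℕ) (L : List Elim) : Task → Prop
  | .GEQRT r k => 1 ≤ k ∧ k ≤ min p q ∧ k ≤ r ∧ r ≤ p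
  | .UNMQR r k j => 1 ≤ k ∧ k ≤ min p q ∧ k ≤ r ∧ r ≤ p ∧ k < j ∧ j ≤ q
  | .TTQRT i piv k => Elim.mk i piv k ∈ L
  | .TTMQR i piv k j => Elim.mk i piv k ∈ L ∧ k < j ∧ j ≤ q

/-- The precedence (dependence) relation between the TT tasks.  Besides the flow
dependencies of the kernels, two tasks reading and writing a common tile
(a pivot tile reused by several eliminations of a column, or a pivot tile that is
subsequently zeroed out) are serialized in the order of the elimination list. -/
inductive Prec (L : List Elim) : Task → Task → Prop
  | geqrt_unmqr (r k j : ℕ) :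
      Prec L (.GEQRT r k) (.UNMQR r k j)
  | geqrt_ttqrt_row (i piv k : ℕ) :
      Prec L (.GEQRT i k) (.TTQRT i piv k)
  | geqrt_ttqrt_piv (i piv k : ℕ) :
      Prec L (.GEQRT piv k) (.TTQRT i piv k)
  | ttqrt_ttmqr (i piv k j : ℕ) :
      Prec L (.TTQRT i piv k) (.TTMQR i piv k j)
  | unmqr_ttmqr_row (i piv k j : ℕ) :
      Prec L (.UNMQR i k j) (.TTMQR i piv k j)
  | unmqr_ttmqr_piv (i piv k j : ℕ) :
      Prec L (.UNMQR piv k j) (.TTMQR i piv k j)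
  | ttmqr_geqrt (a b i k : ℕ) : 2 ≤ k → (a = i ∨ b = i) →
      Prec L (.TTMQR a b (k - 1) k) (.GEQRT i k)
  | ttqrt_serial (i i' piv k : ℕ) :
      Before L (Elim.mk i piv k) (Elim.mk i' piv k) →
      Prec L (.TTQRT i piv k) (.TTQRT i' piv k)
  | ttmqr_serial (i i' piv k j : ℕ) :
      Before L (Elim.mk i piv k) (Elim.mk i' piv k) →
      Prec L (.TTMQR i piv k j) (.TTMQR i' piv k j)
  | ttqrt_pivot_use (a i piv k : ℕ) :
      Prec L (.TTQRT a i k) (.TTQRT i piv k)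
  | ttmqr_pivot_use (a i piv k j : ℕ) :
      Prec L (.TTMQR a i k j) (.TTMQR i piv k j)

/-- A path in the weighted task DAG. -/
def IsPath (p q : ℕ) (L : List Elim) (path : List Task) : Prop :=
  (∀ t ∈ path, InTasks p q L t) ∧ path.Chain' (Prec L)

/-- The critical path length of the tiled algorithm given by the elimination list `L`:
the maximum total weight of a path in the weighted task DAG (equivalently, the makespan
of the earliest-start schedule with unboundedly many processors). -/
noncomputable def cpLength (p q : ℕ) (L : List Elim) : ℕ :=
  sSup { w : ℕ | ∃ path : List Task, IsPath p q L path ∧ w = (path.map weight).sum }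
/-- The tasks of the tiled QR factorization with TS (triangle-on-top-of-square)
kernels. -/
inductive TSTask where
  | GEQRT (r k : ℕ)
  | UNMQR (r k j : ℕ)
  | TSQRT (i piv k : ℕ)
  | TSMQR (i piv k j : ℕ)
deriving DecidableEq

/-- Weights of the TS kernels, the unit being `n_b ^ 3 / 3` flops. -/
def tsWeight : TSTask → ℕ
  | .GEQRT _ _ => 4
  | .UNMQR _ _ _ => 6
  | .TSQRT _ _ _ => 6
  | .TSMQR _ _ _ _ => 12

/-- Row `r` is the pivot of some elimination of column `k`. -/
def IsPivot (L : List Elim) (r k : ℕ) : Prop := ∃ e ∈ L, e.k = k ∧ e.piv = r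

/-- The TS tasks associated with a `p × q` tiled matrix and an elimination list `L`:
only the pivot tiles of each column (and the diagonal tile) are factored into
triangles; every elimination `elim(i, piv, k)` gives a task `TSQRT(i, piv, k)` and
updates `TSMQR(i, piv, k, j)` for `k < j ≤ q`. -/
def TSInTasks (p q : ℕ) (L : List Elim) : TSTask → Prop
  | .GEQRT r k => 1 ≤ k ∧ k ≤ min p q ∧ k ≤ r ∧ r ≤ p ∧ (r = k ∨ IsPivot L r k)
  | .UNMQR r k j => 1 ≤ k ∧ k ≤ min p q ∧ k ≤ r ∧ r ≤ p ∧ (r = k ∨ IsPivot L r k) ∧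
      k < j ∧ j ≤ q
  | .TSQRT i piv k => Elim.mk i piv k ∈ L
  | .TSMQR i piv k j => Elim.mk i piv k ∈ L ∧ k < j ∧ j ≤ q

/-- The precedence (dependence) relation between the TS tasks: flow dependencies of
the kernels; TSQRT (resp. TSMQR) tasks sharing the same pivot row (and column) are
serialized in list order; and every update of a tile from column `k - 1` precedes any
task of column `k` that factors, zeroes out, or uses that tile. -/
inductive TSPrec (L : List Elim) : TSTask → TSTask → Prop
  | geqrt_unmqr (r k j : ℕ) :
      TSPrec L (.GEQRT r k) (.UNMQR r k j)
  | geqrt_tsqrt (i piv k : ℕ) :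
      TSPrec L (.GEQRT piv k) (.TSQRT i piv k)
  | unmqr_tsmqr (i piv k j : ℕ) :
      TSPrec L (.UNMQR piv k j) (.TSMQR i piv k j)
  | tsqrt_tsmqr (i piv k j : ℕ) :
      TSPrec L (.TSQRT i piv k) (.TSMQR i piv k j)
  | tsqrt_serial (i i' piv k : ℕ) :
      Before L (Elim.mk i piv k) (Elim.mk i' piv k) →
      TSPrec L (.TSQRT i piv k) (.TSQRT i' piv k)
  | tsmqr_serial (i i' piv k j : ℕ) :
      Before L (Elim.mk i piv k) (Elim.mk i' piv k) →
      TSPrec L (.TSMQR i piv k j) (.TSMQR i' piv k j)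
  | tsqrt_pivot_use (a i piv k : ℕ) :
      TSPrec L (.TSQRT a i k) (.TSQRT i piv k)
  | tsmqr_pivot_use (a i piv k j : ℕ) :
      TSPrec L (.TSMQR a i k j) (.TSMQR i piv k j)
  | tsmqr_geqrt (a b r k : ℕ) : 2 ≤ k → (a = r ∨ b = r) →
      TSPrec L (.TSMQR a b (k - 1) k) (.GEQRT r k)
  | tsmqr_tsqrt (a b i piv k : ℕ) : 2 ≤ k → (a = i ∨ b = i ∨ a = piv ∨ b = piv) →
      TSPrec L (.TSMQR a b (k - 1) k) (.TSQRT i piv k)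
  | tsmqr_unmqr (a b r k j : ℕ) : 2 ≤ k → (a = r ∨ b = r) →
      TSPrec L (.TSMQR a b (k - 1) j) (.UNMQR r k j)
  | tsmqr_tsmqr (a b i piv k j : ℕ) : 2 ≤ k → (a = i ∨ b = i ∨ a = piv ∨ b = piv) →
      TSPrec L (.TSMQR a b (k - 1) j) (.TSMQR i piv k j)

/-- A path in the weighted TS task DAG. -/
def TSIsPath (p q : ℕ) (L : List Elim) (path : List TSTask) : Prop :=
  (∀ t ∈ path, TSInTasks p q L t) ∧ path.Chain' (TSPrec L)

/-- The critical path length of a tiled algorithm executed with TS kernels. -/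
noncomputable def tsCpLength (p q : ℕ) (L : List Elim) : ℕ :=
  sSup { w : ℕ | ∃ path : List TSTask, TSIsPath p q L path ∧
      w = (path.map tsWeight).sum }
/-- The FlatTree (Sameh-Kuck) elimination list: all eliminations of column `k` use the
diagonal row `k` as pivot; eliminations are listed column by column and, within a
column, by increasing row index. -/
def flatTreeList (p q : ℕ) : List Elim :=
  (List.range' 1 (min p q)).flatMap fun k =>
    (List.range' (k + 1) (p - k)).map fun i => Elim.mk i k k
/-! ### Auxiliary material for the proof -/

section Aux

/-- The strict ordering of eliminations in the FlatTree list. -/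
abbrev FTlt (e f : Elim) : Prop := e.k < f.k ∨ (e.k = f.k ∧ e.i < f.i)

lemma mem_ft {p i piv k : ℕ} :
    Elim.mk i piv k ∈ flatTreeList p p ↔ (piv = k ∧ 1 ≤ k ∧ k < i ∧ i ≤ p) := by
  simp only [flatTreeList, min_self, List.mem_flatMap, List.mem_map, List.mem_range'_1,
    Elim.mk.injEq]
  constructor
  · rintro ⟨k', hk', i', hi', rfl, rfl, rfl⟩
    omega
  · rintro ⟨h0, h1, h2, h3⟩
    refine ⟨k, ⟨h1, by omega⟩, i, ⟨by omega, by omega⟩, rfl, ?_, rfl⟩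
    omega

lemma pivot_ft {p r k : ℕ} (h : IsPivot (flatTreeList p p) r k) : r = k := by
  obtain ⟨⟨i, piv, k'⟩, he, hk, hpiv⟩ := h
  have := (mem_ft.1 he).1
  dsimp at hk hpiv this
  omega

lemma pairwise_ft (p : ℕ) : List.Pairwise FTlt (flatTreeList p p) := by
  rw [flatTreeList, List.pairwise_flatMap]
  constructor
  · intro k _
    rw [List.pairwise_map]
    exact (List.pairwise_lt_range').imp fun h => Or.inr ⟨rfl, h⟩
  · refine (List.pairwise_lt_range').imp ?_
    intro k1 k2 hlt x hx y hy
    simp only [List.mem_map] at hx hy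
    obtain ⟨i1, -, rfl⟩ := hx
    obtain ⟨i2, -, rfl⟩ := hy
    exact Or.inl hlt

lemma before_ft {p : ℕ} {e f : Elim} (h : Before (flatTreeList p p) e f) : FTlt e f := by
  obtain ⟨a, b, hab, ha, hb⟩ := h
  subst ha hb
  exact List.pairwise_iff_get.1 (pairwise_ft p) a b hab

lemma before_lt {p i i' piv k : ℕ}
    (h : Before (flatTreeList p p) ⟨i, piv, k⟩ ⟨i', piv, k⟩) : i < i' := by
  have := before_ft h
  dsimp [FTlt] at this
  omega

lemma ft_before {p : ℕ} {e f : Elim} (he : e ∈ flatTreeList p p)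
    (hf : f ∈ flatTreeList p p) (hR : FTlt e f) : Before (flatTreeList p p) e f := by
  obtain ⟨a, ha⟩ := List.mem_iff_get.1 he
  obtain ⟨b, hb⟩ := List.mem_iff_get.1 hf
  rcases lt_trichotomy (a : ℕ) (b : ℕ) with h | h | h
  · exact ⟨a, b, h, ha, hb⟩
  · exfalso
    have hef : e = f := by rw [← ha, ← hb]; congr 1; exact Fin.ext h
    subst hef
    rcases hR with h1 | ⟨h1, h2⟩ <;> omega
  · exfalso
    have h2 := List.pairwise_iff_get.1 (pairwise_ft p) b a h
    rw [ha, hb] at h2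
    rcases hR with h1 | ⟨h1, h1'⟩ <;> rcases h2 with h3 | ⟨h3, h3'⟩ <;> omega

/-- The earliest finish time of each task in the TS-FT DAG. -/
def pot : TSTask → ℕ
  | .GEQRT _ k => if k = 1 then 4 else 30 * k - 34
  | .UNMQR _ k _ => if k = 1 then 10 else 30 * k - 28
  | .TSQRT i _ k => if k = 1 then 6 * i - 2 else 12 * i + 18 * k - 32
  | .TSMQR i _ k _ => if k = 1 then 12 * i - 2 else 12 * i + 18 * k - 20

lemma edge_pot {p : ℕ} {t t' : TSTask}
    (ht : TSInTasks p p (flatTreeList p p) t) (ht' : TSInTasks p p (flatTreeList p p) t')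
    (h : TSPrec (flatTreeList p p) t t') : pot t + tsWeight t' ≤ pot t' := by
  cases h with
  | geqrt_unmqr r k j =>
      simp only [TSInTasks] at ht
      simp only [pot, tsWeight]; split_ifs <;> omega
  | geqrt_tsqrt i piv k =>
      simp only [TSInTasks] at ht'
      obtain ⟨rfl, h1, h2, h3⟩ := mem_ft.1 ht'
      simp only [pot, tsWeight]; split_ifs <;> omega
  | unmqr_tsmqr i piv k j =>
      simp only [TSInTasks] at ht'
      obtain ⟨rfl, h1, h2, h3⟩ := mem_ft.1 ht'.1
      simp only [pot, tsWeight]; split_ifs <;> omega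
  | tsqrt_tsmqr i piv k j =>
      simp only [TSInTasks] at ht
      obtain ⟨rfl, h1, h2, h3⟩ := mem_ft.1 ht
      simp only [pot, tsWeight]; split_ifs <;> omega
  | tsqrt_serial i i' piv k hbef =>
      simp only [TSInTasks] at ht
      obtain ⟨rfl, h1, h2, h3⟩ := mem_ft.1 ht
      have hlt := before_lt hbef
      simp only [pot, tsWeight]; split_ifs <;> omega
  | tsmqr_serial i i' piv k j hbef =>
      simp only [TSInTasks] at ht
      obtain ⟨rfl, h1, h2, h3⟩ := mem_ft.1 ht.1
      have hlt := before_lt hbef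
      simp only [pot, tsWeight]; split_ifs <;> omega
  | tsqrt_pivot_use a i piv k =>
      simp only [TSInTasks] at ht ht'
      obtain ⟨rfl, h1, h2, h3⟩ := mem_ft.1 ht
      obtain ⟨h4, h5, h6, h7⟩ := mem_ft.1 ht'
      omega
  | tsmqr_pivot_use a i piv k j =>
      simp only [TSInTasks] at ht ht'
      obtain ⟨rfl, h1, h2, h3⟩ := mem_ft.1 ht.1
      obtain ⟨h4, h5, h6, h7⟩ := mem_ft.1 ht'.1
      omega
  | tsmqr_geqrt a b r k h2 hor =>
      simp only [TSInTasks] at ht ht'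
      obtain ⟨rfl, h3, h4, h5⟩ := mem_ft.1 ht.1
      obtain ⟨h6, h7, h8, h9, hr⟩ := ht'
      have hrk : r = k := by
        rcases hr with h | h
        · exact h
        · exact pivot_ft h
      rcases hor with rfl | h10 <;> simp only [pot, tsWeight] <;> split_ifs <;> omega
  | tsmqr_tsqrt a b i piv k h2 hor =>
      simp only [TSInTasks] at ht ht'
      obtain ⟨rfl, h3, h4, h5⟩ := mem_ft.1 ht.1
      obtain ⟨rfl, h6, h7, h8⟩ := mem_ft.1 ht'
      simp only [pot, tsWeight]
      rcases hor with h | h | h | h <;> split_ifs <;> omega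
  | tsmqr_unmqr a b r k j h2 hor =>
      simp only [TSInTasks] at ht ht'
      obtain ⟨rfl, h3, h4, h5⟩ := mem_ft.1 ht.1
      obtain ⟨h6, h7, h8, h9, hr, h10, h11⟩ := ht'
      have hrk : r = k := by
        rcases hr with h | h
        · exact h
        · exact pivot_ft h
      rcases hor with rfl | h12 <;> simp only [pot, tsWeight] <;> split_ifs <;> omega
  | tsmqr_tsmqr a b i piv k j h2 hor =>
      simp only [TSInTasks] at ht ht'
      obtain ⟨rfl, h3, h4, h5⟩ := mem_ft.1 ht.1
      obtain ⟨rfl, h6, h7, h8⟩ := mem_ft.1 ht'.1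
      simp only [pot, tsWeight]
      rcases hor with h | h | h | h <;> split_ifs <;> omega

lemma pot_le {p : ℕ} (hp : 1 < p) {t : TSTask}
    (ht : TSInTasks p p (flatTreeList p p) t) : pot t ≤ 30 * p - 34 := by
  cases t with
  | GEQRT r k =>
      simp only [TSInTasks] at ht
      simp only [pot]; split_ifs <;> omega
  | UNMQR r k j =>
      simp only [TSInTasks] at ht
      simp only [pot]; split_ifs <;> omega
  | TSQRT i piv k =>
      simp only [TSInTasks] at ht
      obtain ⟨rfl, h1, h2, h3⟩ := mem_ft.1 ht
      simp only [pot]; split_ifs <;> omega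
  | TSMQR i piv k j =>
      simp only [TSInTasks] at ht
      obtain ⟨rfl, h1, h2, h3⟩ := mem_ft.1 ht.1
      simp only [pot]; split_ifs <;> omega

lemma wt_le_pot {p : ℕ} {t : TSTask}
    (ht : TSInTasks p p (flatTreeList p p) t) : tsWeight t ≤ pot t := by
  cases t with
  | GEQRT r k =>
      simp only [TSInTasks] at ht
      simp only [pot, tsWeight]; split_ifs <;> omega
  | UNMQR r k j =>
      simp only [TSInTasks] at ht
      simp only [pot, tsWeight]; split_ifs <;> omega
  | TSQRT i piv k =>
      simp only [TSInTasks] at ht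
      obtain ⟨rfl, h1, h2, h3⟩ := mem_ft.1 ht
      simp only [pot, tsWeight]; split_ifs <;> omega
  | TSMQR i piv k j =>
      simp only [TSInTasks] at ht
      obtain ⟨rfl, h1, h2, h3⟩ := mem_ft.1 ht.1
      simp only [pot, tsWeight]; split_ifs <;> omega

lemma chain_bound {p : ℕ} (hp : 1 < p) :
    ∀ (path : List TSTask) (t : TSTask),
      (∀ s ∈ t :: path, TSInTasks p p (flatTreeList p p) s) →
      List.Chain' (TSPrec (flatTreeList p p)) (t :: path) →
      ((t :: path).map tsWeight).sum + pot t ≤ (30 * p - 34) + tsWeight t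
  | [], t, hmem, _ => by
      have := pot_le hp (hmem t (by simp))
      simp only [List.map_cons, List.map_nil, List.sum_cons, List.sum_nil]
      omega
  | t' :: rest, t, hmem, hch => by
      have hch' := List.isChain_cons_cons.1 hch
      have IH := chain_bound hp rest t'
        (fun s hs => hmem s (List.mem_cons_of_mem _ hs)) hch'.2
      have hedge := edge_pot (hmem t (by simp)) (hmem t' (by simp)) hch'.1
      simp only [List.map_cons, List.sum_cons] at IH ⊢
      omega

lemma path_bound {p : ℕ} (hp : 1 < p) {path : List TSTask}
    (h : TSIsPath p p (flatTreeList p p) path) :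
    (path.map tsWeight).sum ≤ 30 * p - 34 := by
  obtain ⟨hmem, hch⟩ := h
  cases path with
  | nil => simp
  | cons t rest =>
      have h1 := chain_bound hp rest t hmem hch
      have h2 := wt_le_pot (hmem t (by simp))
      simp only [List.map_cons, List.sum_cons] at h1 ⊢
      omega

/-! #### The critical path -/

/-- The serialized updates `TSMQR(i, 1, 1, 2)`, `i = s, …, s + d - 1`. -/
def bpart : ℕ → ℕ → List TSTask
  | _, 0 => []
  | i, d + 1 => .TSMQR i 1 1 2 :: bpart (i + 1) d

/-- The tail of the critical path, from column `k` on (`d = p - k` blocks). -/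
def suf (p : ℕ) : ℕ → ℕ → List TSTask
  | _, 0 => [.GEQRT p p]
  | k, d + 1 => .TSQRT p k k :: .TSMQR p k k (k + 1) :: suf p (k + 1) d

/-- The critical path of the TS-FT algorithm. -/
def ftPath (p : ℕ) : List TSTask :=
  .GEQRT 1 1 :: .UNMQR 1 1 2 :: (bpart 2 (p - 1) ++ suf p 2 (p - 2))

lemma bpart_sum : ∀ (d i : ℕ), ((bpart i d).map tsWeight).sum = 12 * d
  | 0, _ => by simp [bpart]
  | d + 1, i => by
      simp only [bpart, List.map_cons, List.sum_cons, bpart_sum d (i + 1), tsWeight]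
      ring

lemma suf_sum (p : ℕ) : ∀ (d k : ℕ), ((suf p k d).map tsWeight).sum = 18 * d + 4
  | 0, _ => by simp [suf, tsWeight]
  | d + 1, k => by
      simp only [suf, List.map_cons, List.sum_cons, suf_sum p d (k + 1), tsWeight]
      ring

lemma bpart_mem {p : ℕ} : ∀ (d i : ℕ), 2 ≤ i → i + d ≤ p + 1 →
    ∀ t ∈ bpart i d, TSInTasks p p (flatTreeList p p) t
  | 0, i, _, _ => by simp [bpart]
  | d + 1, i, h2, hd => by
      intro t ht
      simp only [bpart] at ht
      rcases List.mem_cons.1 ht with rfl | ht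
      · exact ⟨mem_ft.2 ⟨rfl, le_rfl, by omega, by omega⟩, by omega, by omega⟩
      · exact bpart_mem d (i + 1) (by omega) (by omega) t ht

lemma suf_mem {p : ℕ} : ∀ (d k : ℕ), 1 ≤ k → k + d = p →
    ∀ t ∈ suf p k d, TSInTasks p p (flatTreeList p p) t
  | 0, k, h1, hd => by
      intro t ht
      simp only [suf] at ht
      rcases List.mem_cons.1 ht with rfl | ht
      · exact ⟨by omega, by omega, le_rfl, le_rfl, Or.inl rfl⟩
      · simp at ht
  | d + 1, k, h1, hd => by
      intro t ht
      simp only [suf] at ht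
      rcases List.mem_cons.1 ht with rfl | ht
      · exact mem_ft.2 ⟨rfl, h1, by omega, by omega⟩
      · rcases List.mem_cons.1 ht with rfl | ht
        · exact ⟨mem_ft.2 ⟨rfl, h1, by omega, by omega⟩, by omega, by omega⟩
        · exact suf_mem d (k + 1) (by omega) (by omega) t ht

lemma suf_head (p k d : ℕ) (h : suf p k d ≠ []) :
    (suf p k d).head h = if d = 0 then .GEQRT p p else .TSQRT p k k := by
  cases d <;> simp [suf]

lemma suf_chain {p : ℕ} : ∀ (d k : ℕ), 1 ≤ k → k + d = p →
    List.Chain' (TSPrec (flatTreeList p p)) (suf p k d) := by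
  intro d
  induction d with
  | zero => intro k _ _; exact List.isChain_singleton _
  | succ d ih =>
      intro k hk hd
      cases d with
      | zero =>
          have hkp : k + 1 = p := by omega
          subst hkp
          simp only [suf]
          exact List.isChain_cons_cons.2 ⟨.tsqrt_tsmqr _ _ _ _,
            List.isChain_cons_cons.2 ⟨.tsmqr_geqrt (k + 1) k (k + 1) (k + 1) (by omega)
              (Or.inl rfl), List.isChain_singleton _⟩⟩
      | succ d' =>
          have h1 := ih (k + 1) (by omega) (by omega)
          show List.Chain' _
            (.TSQRT p k k :: .TSMQR p k k (k + 1) :: suf p (k + 1) (d' + 1))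
          refine List.isChain_cons_cons.2 ⟨.tsqrt_tsmqr _ _ _ _, ?_⟩
          have h2 : suf p (k + 1) (d' + 1) = .TSQRT p (k + 1) (k + 1) ::
              .TSMQR p (k + 1) (k + 1) (k + 1 + 1) :: suf p (k + 1 + 1) d' := rfl
          rw [h2] at h1 ⊢
          exact List.isChain_cons_cons.2
            ⟨.tsmqr_tsqrt p k p (k + 1) (k + 1) (by omega) (Or.inl rfl), h1⟩

lemma bpart_chain {p : ℕ} (hp : 1 < p) :
    ∀ (d i : ℕ), 2 ≤ i → i + d = p + 1 → 1 ≤ d →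
    ∀ rest : List TSTask, List.Chain' (TSPrec (flatTreeList p p)) rest →
      (∀ h : rest ≠ [], TSPrec (flatTreeList p p) (.TSMQR p 1 1 2) (rest.head h)) →
      List.Chain' (TSPrec (flatTreeList p p)) (bpart i d ++ rest) := by
  intro d
  induction d with
  | zero => intro i _ _ h1; exact absurd h1 (by omega)
  | succ d ih =>
      intro i h2 hd _ rest hrest hhead
      cases d with
      | zero =>
          have hip : i = p := by omega
          subst hip
          simp only [bpart, List.nil_append, List.cons_append]
          refine List.isChain_cons.2 ⟨?_, hrest⟩
          intro y hy
          cases rest with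
          | nil => simp at hy
          | cons r rs =>
              simp only [List.head?_cons, Option.mem_some_iff] at hy
              subst hy
              exact hhead (by simp)
      | succ d' =>
          simp only [bpart, List.cons_append]
          refine List.isChain_cons.2 ⟨?_, ih (i + 1) (by omega) (by omega) (by omega)
            rest hrest hhead⟩
          intro y hy
          simp only [bpart, List.cons_append, List.head?_cons, Option.mem_some_iff] at hy
          subst hy
          exact .tsmqr_serial i (i + 1) 1 1 2
            (ft_before (mem_ft.2 ⟨rfl, le_rfl, by omega, by omega⟩)
              (mem_ft.2 ⟨rfl, le_rfl, by omega, by omega⟩) (Or.inr ⟨rfl, Nat.lt_succ_self i⟩))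

lemma ftPath_chain {p : ℕ} (hp : 1 < p) :
    List.Chain' (TSPrec (flatTreeList p p)) (ftPath p) := by
  have hhead : ∀ h : suf p 2 (p - 2) ≠ [],
      TSPrec (flatTreeList p p) (.TSMQR p 1 1 2) ((suf p 2 (p - 2)).head h) := by
    intro h
    rw [suf_head]
    split_ifs with h0
    · have hp2 : p = 2 := by omega
      subst hp2
      exact .tsmqr_geqrt 2 1 2 2 le_rfl (Or.inl rfl)
    · exact .tsmqr_tsqrt p 1 p 2 2 le_rfl (Or.inl rfl)
  have hb := bpart_chain hp (p - 1) 2 le_rfl (by omega) (by omega)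
    (suf p 2 (p - 2)) (suf_chain (p - 2) 2 (by omega) (by omega)) hhead
  obtain ⟨d, hd⟩ : ∃ d, p - 1 = d + 1 := ⟨p - 2, by omega⟩
  unfold ftPath
  refine List.isChain_cons_cons.2 ⟨.geqrt_unmqr 1 1 2, ?_⟩
  rw [hd] at hb ⊢
  simp only [bpart, List.cons_append] at hb ⊢
  exact List.isChain_cons_cons.2 ⟨.unmqr_tsmqr 2 1 1 2, hb⟩

lemma ftPath_mem {p : ℕ} (hp : 1 < p) :
    ∀ t ∈ ftPath p, TSInTasks p p (flatTreeList p p) t := by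
  intro t ht
  simp only [ftPath, List.mem_cons, List.mem_append] at ht
  rcases ht with rfl | rfl | ht | ht
  · exact ⟨le_rfl, by omega, le_rfl, by omega, Or.inl rfl⟩
  · exact ⟨le_rfl, by omega, le_rfl, by omega, Or.inl rfl, by omega, by omega⟩
  · exact bpart_mem (p - 1) 2 le_rfl (by omega) t ht
  · exact suf_mem (p - 2) 2 (by omega) (by omega) t ht

lemma ftPath_sum {p : ℕ} (hp : 1 < p) :
    ((ftPath p).map tsWeight).sum = 30 * p - 34 := by
  simp only [ftPath, List.map_cons, List.sum_cons, List.map_append, List.sum_append,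
    bpart_sum, suf_sum, tsWeight]
  omega

end Aux

/-- **Proposition 2, case `p = q > 1`.** The critical path length of the TS-FT
algorithm (FlatTree with TS kernels) on a square `p × p` matrix with `p > 1` is
`30p - 34`. -/
theorem tsft_cpLength_square (p : ℕ) (hp : 1 < p) :
    tsCpLength p p (flatTreeList p p) = 30 * p - 34 := by
  unfold tsCpLength
  apply le_antisymm
  · apply csSup_le
    · exact ⟨0, [], ⟨fun t ht => absurd ht List.not_mem_nil, List.isChain_nil⟩, by simp⟩
    · rintro w ⟨path, hpath, rfl⟩
      exact path_bound hp hpath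
  · apply le_csSup
    · refine ⟨30 * p - 34, fun w hw => ?_⟩
      obtain ⟨path, hpath, rfl⟩ := hw
      exact path_bound hp hpath
    · exact ⟨ftPath p, ⟨ftPath_mem hp, ftPath_chain hp⟩, (ftPath_sum hp).symm⟩

end TiledQR
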